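/- For every k > 0 and every y ≥ 0, the Poisson log-exp reparameterized data-fit ψ_{k,y} is convex on ℝ. -/

import Mathlib

open Real

private lemma psi_hasDeriv (k y : ℝ) (hk : 0 < k) (θ : ℝ) :
    HasDerivAt (fun θ : ℝ => k * Real.log (1 + Real.exp θ)
        - y * Real.log (k * Real.log (1 + Real.exp θ)))
      (k * (Real.exp θ / (1 + Real.exp θ))
        - y * (Real.exp θ / ((1 + Real.exp θ) * Real.log (1 + Real.exp θ)))) θ := by
  have hE : 0 < Real.exp θ := Real.exp_pos θ
  have hS : (0:ℝ) < 1 + Real.exp θ := by linarith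
  have hg : 0 < Real.log (1 + Real.exp θ) := Real.log_pos (by linarith)
  have h1 : HasDerivAt (fun θ : ℝ => 1 + Real.exp θ) (Real.exp θ) θ :=
    (Real.hasDerivAt_exp θ).const_add 1
  have h2 : HasDerivAt (fun θ : ℝ => Real.log (1 + Real.exp θ))
      (Real.exp θ / (1 + Real.exp θ)) θ := h1.log hS.ne'
  have h3 : HasDerivAt (fun θ : ℝ => k * Real.log (1 + Real.exp θ))
      (k * (Real.exp θ / (1 + Real.exp θ))) θ := h2.const_mul k
  have h4 : HasDerivAt (fun θ : ℝ => Real.log (k * Real.log (1 + Real.exp θ)))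
      ((k * (Real.exp θ / (1 + Real.exp θ))) / (k * Real.log (1 + Real.exp θ))) θ :=
    h3.log (by positivity)
  have h5 := h3.sub (h4.const_mul y)
  refine h5.congr_deriv ?_
  field_simp

private lemma psi_deriv2 (k y : ℝ) (hk : 0 < k) (θ : ℝ) :
    HasDerivAt (fun θ : ℝ => k * (Real.exp θ / (1 + Real.exp θ))
        - y * (Real.exp θ / ((1 + Real.exp θ) * Real.log (1 + Real.exp θ))))
      (k * (Real.exp θ / (1 + Real.exp θ)^2)
        - y * ((Real.exp θ * (Real.log (1 + Real.exp θ) - Real.exp θ))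
          / ((1 + Real.exp θ)^2 * (Real.log (1 + Real.exp θ))^2))) θ := by
  have hE : 0 < Real.exp θ := Real.exp_pos θ
  have hS : (0:ℝ) < 1 + Real.exp θ := by linarith
  have hg : 0 < Real.log (1 + Real.exp θ) := Real.log_pos (by linarith)
  have h1 : HasDerivAt (fun θ : ℝ => 1 + Real.exp θ) (Real.exp θ) θ :=
    (Real.hasDerivAt_exp θ).const_add 1
  have h2 : HasDerivAt (fun θ : ℝ => Real.log (1 + Real.exp θ))
      (Real.exp θ / (1 + Real.exp θ)) θ := h1.log hS.ne'
  -- derivative of E/S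
  have hA : HasDerivAt (fun θ : ℝ => Real.exp θ / (1 + Real.exp θ))
      ((Real.exp θ * (1 + Real.exp θ) - Real.exp θ * Real.exp θ) / (1 + Real.exp θ)^2) θ :=
    (Real.hasDerivAt_exp θ).div h1 hS.ne'
  -- derivative of S * g
  have hv : HasDerivAt (fun θ : ℝ => (1 + Real.exp θ) * Real.log (1 + Real.exp θ))
      (Real.exp θ * Real.log (1 + Real.exp θ)
        + (1 + Real.exp θ) * (Real.exp θ / (1 + Real.exp θ))) θ := h1.mul h2
  have hB : HasDerivAt (fun θ : ℝ =>
      Real.exp θ / ((1 + Real.exp θ) * Real.log (1 + Real.exp θ)))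
      ((Real.exp θ * ((1 + Real.exp θ) * Real.log (1 + Real.exp θ))
        - Real.exp θ * (Real.exp θ * Real.log (1 + Real.exp θ)
          + (1 + Real.exp θ) * (Real.exp θ / (1 + Real.exp θ))))
        / ((1 + Real.exp θ) * Real.log (1 + Real.exp θ))^2) θ :=
    (Real.hasDerivAt_exp θ).div hv (by positivity)
  have h5 := (hA.const_mul k).sub (hB.const_mul y)
  refine h5.congr_deriv ?_
  field_simp
  ring

/-- **Poisson log-exp reparameterized data-fit is convex.**
For every k > 0 and every y ≥ 0, the Poisson log-exp reparameterized data-fit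
ψ_{k,y}(θ) = k·log(1 + exp θ) - y·log(k·log(1 + exp θ)) is convex on ℝ. -/
theorem poisson_logexp_datafit_convex
    (k : ℝ) (hk : 0 < k) (y : ℝ) (hy : 0 ≤ y) :
    ConvexOn ℝ Set.univ (fun θ : ℝ =>
      k * Real.log (1 + Real.exp θ)
        - y * Real.log (k * Real.log (1 + Real.exp θ))) := by
  have hderiv : deriv (fun θ : ℝ => k * Real.log (1 + Real.exp θ)
      - y * Real.log (k * Real.log (1 + Real.exp θ)))
      = fun θ : ℝ => k * (Real.exp θ / (1 + Real.exp θ))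
        - y * (Real.exp θ / ((1 + Real.exp θ) * Real.log (1 + Real.exp θ))) :=
    funext fun θ => (psi_hasDeriv k y hk θ).deriv
  apply convexOn_of_deriv2_nonneg convex_univ
  · exact fun θ _ => (psi_hasDeriv k y hk θ).continuousAt.continuousWithinAt
  · intro θ _
    exact (psi_hasDeriv k y hk θ).differentiableAt.differentiableWithinAt
  · intro θ _
    rw [interior_univ] at *
    rw [hderiv]
    exact (psi_deriv2 k y hk θ).differentiableAt.differentiableWithinAt
  · intro θ _
    have hE : 0 < Real.exp θ := Real.exp_pos θ
    have hS : (0:ℝ) < 1 + Real.exp θ := by linarith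
    have hg : 0 < Real.log (1 + Real.exp θ) := Real.log_pos (by linarith)
    have hgE : Real.log (1 + Real.exp θ) ≤ Real.exp θ := by
      have := Real.log_le_sub_one_of_pos hS
      linarith
    have : deriv^[2] (fun θ : ℝ => k * Real.log (1 + Real.exp θ)
        - y * Real.log (k * Real.log (1 + Real.exp θ))) θ
        = k * (Real.exp θ / (1 + Real.exp θ)^2)
          - y * ((Real.exp θ * (Real.log (1 + Real.exp θ) - Real.exp θ))
            / ((1 + Real.exp θ)^2 * (Real.log (1 + Real.exp θ))^2)) := by
      simp only [Function.iterate_succ, Function.iterate_zero, Function.comp_apply, id]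
      rw [hderiv]
      exact (psi_deriv2 k y hk θ).deriv
    rw [this]
    have h1 : 0 ≤ k * (Real.exp θ / (1 + Real.exp θ)^2) := by positivity
    have h2 : (Real.exp θ * (Real.log (1 + Real.exp θ) - Real.exp θ))
        / ((1 + Real.exp θ)^2 * (Real.log (1 + Real.exp θ))^2) ≤ 0 := by
      apply div_nonpos_of_nonpos_of_nonneg
      · nlinarith
      · positivity
    nlinarith [mul_nonneg hy (neg_nonneg.mpr h2)]
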